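/- Let (X_i)_{i≥1} be i.i.d. random variables with values in ℤ_{≥−1} = {−1,0,1,2,…}, with P(X_1 = −1) > 0 and E[X_1] = 0. Define L_1(x) = x^2 P(X_1 ≥ x) and L(x) = Var(X_1 1_{|X_1| ≤ x}) for x > 0, and let (a_n) be a sequence of positive reals. Assume that L_1 and L are slowly varying at infinity, that L_1(x)/L(x) → 0 as x → ∞, that a_n → ∞, and that n L(a_n)/a_n^2 → 2 as n → ∞. Then a_n^{−2} ∑_{i=1}^{n} X_i^2 converges to 2 in probability as n → ∞. -/

import Mathlib

open MeasureTheory ProbabilityTheory Filter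
open scoped ENNReal Topology

lemma aux_dyadic (g G : ℝ → ℝ) (x₀ : ℝ) (hx0 : 1 ≤ x₀)
    (hG0 : ∀ x, x₀ ≤ x → 0 ≤ G x) (hG2 : ∀ x, x₀ ≤ x → G (2*x) ≤ 3/2 * G x)
    (hstep : ∀ x, x₀ ≤ x → g x ≤ 2 * G x / x + g (2*x))
    (hlim : ∀ x, x₀ ≤ x → Tendsto (fun k : ℕ => g (2^k * x)) atTop (𝓝 0)) :
    ∀ x, x₀ ≤ x → g x ≤ 8 * G x / x := by
  have key : ∀ k : ℕ, ∀ x, x₀ ≤ x → g x ≤ 8 * G x / x + g (2^k * x) := by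
    intro k
    induction k with
    | zero =>
      intro x hx
      have hx1 : (0:ℝ) < x := lt_of_lt_of_le (by linarith) hx
      have h0 : 0 ≤ 8 * G x / x := by
        apply div_nonneg _ hx1.le
        have := hG0 x hx; linarith
      simpa using by linarith [(by norm_num : (2:ℝ)^(0:ℕ) * x = x) ▸ h0]
    | succ k ih =>
      intro x hx
      have hx1 : (0:ℝ) < x := lt_of_lt_of_le (by linarith) hx
      have h2x : x₀ ≤ 2 * x := by linarith
      have h1 := hstep x hx
      have h2 := ih (2*x) h2x
      have h3 := hG2 x hx
      have h4 : g (2^k * (2*x)) = g (2^(k+1) * x) := by ring_nf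
      have h5 : 8 * G (2*x) / (2*x) ≤ 6 * G x / x := by
        rw [div_le_div_iff₀ (by linarith) hx1]
        nlinarith [hG0 x hx]
      calc g x ≤ 2 * G x / x + g (2*x) := h1
        _ ≤ 2 * G x / x + (8 * G (2*x) / (2*x) + g (2^k * (2*x))) := by linarith
        _ ≤ 8 * G x / x + g (2^(k+1) * x) := by
            rw [← h4]; have : 2 * G x / x + 6 * G x / x = 8 * G x / x := by ring
            linarith
  intro x hx
  have hx1 : (0:ℝ) < x := lt_of_lt_of_le (by linarith) hx
  have := hlim x hx
  have h2 : Tendsto (fun k : ℕ => 8 * G x / x + g (2^k * x)) atTop (𝓝 (8 * G x / x)) := by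
    simpa using (tendsto_const_nhds.add this)
  exact ge_of_tendsto h2 (Eventually.of_forall (fun k => key k x hx))

section Aux
set_option linter.unusedSectionVars false
variable {Ω : Type} [MeasurableSpace Ω] {μ : Measure Ω} [IsProbabilityMeasure μ]
variable {Z : Ω → ℝ}

lemma meas_trunc (hZ : Measurable Z) (x : ℝ) :
    Measurable (fun ω => if |Z ω| ≤ x then Z ω else 0) :=
  Measurable.ite (measurableSet_le hZ.abs measurable_const) hZ measurable_const

lemma meas_trsq (hZ : Measurable Z) (x : ℝ) :
    Measurable (fun ω => if |Z ω| ≤ x then Z ω ^ 2 else 0) :=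
  Measurable.ite (measurableSet_le hZ.abs measurable_const) (hZ.pow_const 2) measurable_const

lemma meas_tl (hZ : Measurable Z) (x : ℝ) :
    Measurable (fun ω => if x < Z ω then Z ω else 0) :=
  Measurable.ite (measurableSet_lt measurable_const hZ) hZ measurable_const

lemma int_trunc (hZ : Measurable Z) (hint : Integrable Z μ) (x : ℝ) :
    Integrable (fun ω => if |Z ω| ≤ x then Z ω else 0) μ := by
  refine hint.abs.mono' (meas_trunc hZ x).aestronglyMeasurable (ae_of_all _ fun ω => ?_)
  by_cases h : |Z ω| ≤ x <;> simp [h, abs_nonneg]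

lemma int_tl (hZ : Measurable Z) (hint : Integrable Z μ) (x : ℝ) :
    Integrable (fun ω => if x < Z ω then Z ω else 0) μ := by
  refine hint.abs.mono' (meas_tl hZ x).aestronglyMeasurable (ae_of_all _ fun ω => ?_)
  by_cases h : x < Z ω <;> simp [h, abs_nonneg]

lemma memlp_trsq (hZ : Measurable Z) (x : ℝ) (p : ℝ≥0∞) :
    MemLp (fun ω => if |Z ω| ≤ x then Z ω ^ 2 else 0) p μ := by
  refine MemLp.of_bound (meas_trsq hZ x).aestronglyMeasurable (x ^ 2)
    (ae_of_all _ fun ω => ?_)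
  by_cases h : |Z ω| ≤ x
  · simp only [h, if_true, Real.norm_eq_abs, abs_pow]
    calc |Z ω| ^ 2 ≤ x ^ 2 := by
          have := abs_nonneg (Z ω)
          nlinarith [abs_nonneg (Z ω)]
      _ = x ^ 2 := rfl
  · simp [h, sq_nonneg]

lemma int_trsq (hZ : Measurable Z) (x : ℝ) :
    Integrable (fun ω => if |Z ω| ≤ x then Z ω ^ 2 else 0) μ :=
  memLp_one_iff_integrable.mp (memlp_trsq hZ x 1)

lemma memlp_trunc (hZ : Measurable Z) (x : ℝ) (p : ℝ≥0∞) :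
    MemLp (fun ω => if |Z ω| ≤ x then Z ω else 0) p μ := by
  refine MemLp.of_bound (meas_trunc hZ x).aestronglyMeasurable |x|
    (ae_of_all _ fun ω => ?_)
  by_cases h : |Z ω| ≤ x
  · simp only [h, if_true, Real.norm_eq_abs]
    exact h.trans (le_abs_self x)
  · simp [h, abs_nonneg]

/-- `E[Z² 1_{|Z|≤x}] = Var(Z 1_{|Z|≤x}) + (E[Z 1_{|Z|≤x}])²` -/
lemma q_eq_L_add_m (hZ : Measurable Z) (x : ℝ) :
    (∫ ω, (if |Z ω| ≤ x then Z ω ^ 2 else 0) ∂μ)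
      = variance (fun ω => if |Z ω| ≤ x then Z ω else 0) μ
        + (∫ ω, (if |Z ω| ≤ x then Z ω else 0) ∂μ) ^ 2 := by
  rw [variance_eq_sub (memlp_trunc hZ x 2)]
  have h2 : ((fun ω => if |Z ω| ≤ x then Z ω else 0) ^ 2)
      = fun ω => if |Z ω| ≤ x then Z ω ^ 2 else 0 := by
    funext ω; by_cases hc : |Z ω| ≤ x <;> simp [hc]
  rw [h2]; ring
end Aux

section Aux2
set_option linter.unusedSectionVars false
variable {Ω : Type} [MeasurableSpace Ω] {μ : Measure Ω} [IsProbabilityMeasure μ]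
variable {Z : Ω → ℝ}

lemma g_nonneg (x : ℝ) (hx : 0 ≤ x) :
    0 ≤ ∫ ω, (if x < Z ω then Z ω else 0) ∂μ := by
  refine integral_nonneg fun ω => ?_
  by_cases h : x < Z ω <;> simp [h]
  · linarith

lemma g_step (hZ : Measurable Z) (hint : Integrable Z μ) (x : ℝ) (hx : 0 < x) :
    ∫ ω, (if x < Z ω then Z ω else 0) ∂μ
      ≤ 2 * x * (μ {ω | x ≤ Z ω}).toReal + ∫ ω, (if 2 * x < Z ω then Z ω else 0) ∂μ := by
  have hs : MeasurableSet {ω | x ≤ Z ω} := measurableSet_le measurable_const hZ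
  have hind : Integrable (fun ω => Set.indicator {ω | x ≤ Z ω} (fun _ => 2 * x) ω) μ :=
    (integrable_indicator_iff hs).mpr (integrableOn_const (measure_ne_top _ _))
  have hmono : ∀ ω, (if x < Z ω then Z ω else 0)
      ≤ Set.indicator {ω | x ≤ Z ω} (fun _ => 2 * x) ω + (if 2 * x < Z ω then Z ω else 0) := by
    intro ω
    by_cases h1 : x < Z ω
    · have hmem : ω ∈ {ω | x ≤ Z ω} := le_of_lt h1
      rw [Set.indicator_of_mem hmem]
      by_cases h2 : 2 * x < Z ω
      · simp only [h1, if_true, h2, if_true]; linarith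
      · simp only [h1, if_true, h2, if_false]; push_neg at h2; linarith
    · have h2 : ¬ (2 * x < Z ω) := by push_neg at h1 ⊢; linarith
      simp only [h1, h2, if_false]
      by_cases hmem : ω ∈ {ω | x ≤ Z ω}
      · rw [Set.indicator_of_mem hmem]; linarith
      · rw [Set.indicator_of_notMem hmem]; simp
  calc ∫ ω, (if x < Z ω then Z ω else 0) ∂μ
      ≤ ∫ ω, (Set.indicator {ω | x ≤ Z ω} (fun _ => 2 * x) ω
          + (if 2 * x < Z ω then Z ω else 0)) ∂μ :=
        integral_mono (int_tl hZ hint x) (hind.add (int_tl hZ hint (2 * x))) hmono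
    _ = 2 * x * (μ {ω | x ≤ Z ω}).toReal + ∫ ω, (if 2 * x < Z ω then Z ω else 0) ∂μ := by
        rw [integral_add hind (int_tl hZ hint (2 * x)), integral_indicator_const _ hs]
        simp [mul_comm, measureReal_def]

lemma g_lim (hZ : Measurable Z) (hint : Integrable Z μ) (x : ℝ) (hx : 0 < x) :
    Tendsto (fun k : ℕ => ∫ ω, (if (2:ℝ) ^ k * x < Z ω then Z ω else 0) ∂μ) atTop (𝓝 0) := by
  have key := tendsto_integral_of_dominated_convergence
    (F := fun (k:ℕ) ω => if (2:ℝ) ^ k * x < Z ω then Z ω else 0)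
    (f := fun _ => (0:ℝ)) (μ := μ) (fun ω => |Z ω|)
    (fun k => (meas_tl hZ _).aestronglyMeasurable) hint.abs
    (fun k => ae_of_all _ fun ω => ?_) (ae_of_all _ fun ω => ?_)
  · simpa using key
  · by_cases h : (2:ℝ) ^ k * x < Z ω <;> simp [h, abs_nonneg]
  · have hto : Tendsto (fun k : ℕ => (2:ℝ) ^ k * x) atTop atTop :=
      Tendsto.atTop_mul_const hx (tendsto_pow_atTop_atTop_of_one_lt one_lt_two)
    have : ∀ᶠ k : ℕ in atTop, ¬ ((2:ℝ) ^ k * x < Z ω) := by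
      filter_upwards [hto.eventually_ge_atTop (Z ω)] with k hk
      exact not_lt.mpr hk
    refine Tendsto.congr' ?_ tendsto_const_nhds
    filter_upwards [this] with k hk
    simp [hk]

lemma m_eq_neg_g (hZ : Measurable Z) (hint : Integrable Z μ) (hval : ∀ ω, -1 ≤ Z ω)
    (hmean : ∫ ω, Z ω ∂μ = 0) (x : ℝ) (hx : 1 ≤ x) :
    ∫ ω, (if |Z ω| ≤ x then Z ω else 0) ∂μ = - ∫ ω, (if x < Z ω then Z ω else 0) ∂μ := by
  have hpt : ∀ ω, (if |Z ω| ≤ x then Z ω else 0) + (if x < Z ω then Z ω else 0) = Z ω := by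
    intro ω
    by_cases h : |Z ω| ≤ x
    · have : ¬ (x < Z ω) := not_lt.mpr ((le_abs_self _).trans h)
      simp [h, this]
    · have habs : x < |Z ω| := lt_of_not_ge h
      have : x < Z ω := by
        rcases abs_cases (Z ω) with ⟨he, _⟩ | ⟨he, _⟩
        · linarith
        · linarith [hval ω]
      simp [h, this]
  have hadd := integral_add (int_trunc hZ hint x) (int_tl hZ hint x)
  have h2 : ∫ ω, ((if |Z ω| ≤ x then Z ω else 0) + (if x < Z ω then Z ω else 0)) ∂μ = 0 := by
    rw [integral_congr_ae (ae_of_all _ hpt)]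
    exact hmean
  rw [h2] at hadd
  linarith [hadd]
end Aux2

section Aux3
set_option linter.unusedSectionVars false
variable {Ω : Type} [MeasurableSpace Ω] {μ : Measure Ω} [IsProbabilityMeasure μ]
variable {X : ℕ → Ω → ℤ}

lemma meas_int_cast (f : ℤ → ℝ) : Measurable f := fun _ _ => trivial

lemma ident_integral (hmeas : ∀ i, Measurable (X i))
    (hident : ∀ i, Measure.map (X i) μ = Measure.map (X 0) μ) (i : ℕ) (f : ℤ → ℝ) :
    ∫ ω, f (X i ω) ∂μ = ∫ ω, f (X 0 ω) ∂μ := by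
  have hf : ∀ ν : Measure ℤ, AEStronglyMeasurable f ν := fun ν =>
    ((meas_int_cast f).stronglyMeasurable).aestronglyMeasurable
  rw [← integral_map (hmeas i).aemeasurable (hf _), hident i,
    integral_map (hmeas 0).aemeasurable (hf _)]

lemma ident_measure (hmeas : ∀ i, Measurable (X i))
    (hident : ∀ i, Measure.map (X i) μ = Measure.map (X 0) μ) (i : ℕ) (S : Set ℤ) :
    μ {ω | X i ω ∈ S} = μ {ω | X 0 ω ∈ S} := by
  have hS : MeasurableSet S := trivial
  have h1 : {ω | X i ω ∈ S} = X i ⁻¹' S := rfl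
  have h2 : {ω | X 0 ω ∈ S} = X 0 ⁻¹' S := rfl
  rw [h1, h2, ← Measure.map_apply (hmeas i) hS, ← Measure.map_apply (hmeas 0) hS, hident i]

lemma ident_variance (hmeas : ∀ i, Measurable (X i))
    (hident : ∀ i, Measure.map (X i) μ = Measure.map (X 0) μ) (i : ℕ) (f : ℤ → ℝ) (C : ℝ)
    (hC : ∀ z, ‖f z‖ ≤ C) :
    variance (fun ω => f (X i ω)) μ = variance (fun ω => f (X 0 ω)) μ := by
  have hmem : ∀ j, MemLp (fun ω => f (X j ω)) 2 μ := fun j =>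
    MemLp.of_bound ((meas_int_cast f).comp (hmeas j)).aestronglyMeasurable C
      (ae_of_all _ fun ω => hC _)
  rw [variance_eq_sub (hmem i), variance_eq_sub (hmem 0)]
  have h1 : ((fun ω => f (X i ω)) ^ 2) = fun ω => (f ^ 2) (X i ω) := rfl
  have h2 : ((fun ω => f (X 0 ω)) ^ 2) = fun ω => (f ^ 2) (X 0 ω) := rfl
  rw [h1, h2, ident_integral hmeas hident i (f ^ 2), ident_integral hmeas hident i f]

lemma var_sum_le (hmeas : ∀ i, Measurable (X i))
    (hindep : iIndepFun X μ)
    (hident : ∀ i, Measure.map (X i) μ = Measure.map (X 0) μ)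
    (n : ℕ) (f : ℤ → ℝ) (C : ℝ) (hC : ∀ z, ‖f z‖ ≤ C) :
    variance (∑ i ∈ Finset.range n, fun ω => f (X i ω)) μ
      = n * variance (fun ω => f (X 0 ω)) μ := by
  have hYindep : iIndepFun (fun i ω => f (X i ω)) μ :=
    hindep.comp (fun _ => f) (fun _ => meas_int_cast f)
  have hmem : ∀ j, MemLp (fun ω => f (X j ω)) 2 μ := fun j =>
    MemLp.of_bound ((meas_int_cast f).comp (hmeas j)).aestronglyMeasurable C
      (ae_of_all _ fun ω => hC _)
  rw [IndepFun.variance_sum (fun i _ => hmem i)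
    (fun i _ j _ hij => hYindep.indepFun hij)]
  rw [Finset.sum_congr rfl (fun i _ => ident_variance hmeas hident i f C hC)]
  simp [Finset.sum_const, mul_comm]
end Aux3

set_option maxHeartbeats 4000000 in
/-- Let `(X_i)` be i.i.d., `ℤ_{≥−1}`-valued, with `P(X_1 = −1) > 0` and `E[X_1] = 0`.
Let `L₁(x) = x² P(X_1 ≥ x)` and `L(x) = Var(X_1 1_{|X_1| ≤ x})` be slowly varying with
`L₁/L → 0`, and let `a_n → ∞` satisfy `n L(a_n)/a_n² → 2`. Then
`a_n⁻² ∑_{i=1}^n X_i²` converges to `2` in probability. -/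
theorem stmt12 {Ω : Type} [MeasurableSpace Ω] (μ : Measure Ω) [IsProbabilityMeasure μ]
    (X : ℕ → Ω → ℤ) (hmeas : ∀ i, Measurable (X i)) (hval : ∀ i ω, -1 ≤ X i ω)
    (hindep : iIndepFun X μ)
    (hident : ∀ i, Measure.map (X i) μ = Measure.map (X 0) μ)
    (hneg : 0 < μ {ω | X 0 ω = -1})
    (hint : Integrable (fun ω => (X 0 ω : ℝ)) μ)
    (hmean : ∫ ω, (X 0 ω : ℝ) ∂μ = 0)
    (L1 L : ℝ → ℝ)
    (hL1def : ∀ x : ℝ, 0 < x → L1 x = x ^ 2 * (μ {ω | x ≤ (X 0 ω : ℝ)}).toReal)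
    (hLdef : ∀ x : ℝ, 0 < x →
      L x = variance (fun ω => if |(X 0 ω : ℝ)| ≤ x then (X 0 ω : ℝ) else 0) μ)
    (hL1sv : ∀ c : ℝ, 0 < c → Tendsto (fun x => L1 (c * x) / L1 x) atTop (𝓝 1))
    (hLsv : ∀ c : ℝ, 0 < c → Tendsto (fun x => L (c * x) / L x) atTop (𝓝 1))
    (hratio : Tendsto (fun x => L1 x / L x) atTop (𝓝 0))
    (a : ℕ → ℝ) (hapos : ∀ n, 0 < a n) (ha : Tendsto a atTop atTop)
    (hnorm : Tendsto (fun n : ℕ => (n : ℝ) * L (a n) / (a n) ^ 2) atTop (𝓝 2)) :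
    ∀ ε : ℝ, 0 < ε →
      Tendsto (fun n : ℕ => μ {ω | ε <
          |((a n) ^ 2)⁻¹ * (∑ i ∈ Finset.range n, (X i ω : ℝ) ^ 2) - 2|})
        atTop (𝓝 0) := by
  intro ε hε
  have hZmeas : Measurable (fun ω => (X 0 ω : ℝ)) := (meas_int_cast _).comp (hmeas 0)
  have hZval : ∀ ω, (-1:ℝ) ≤ (X 0 ω : ℝ) := fun ω => by
    have := hval 0 ω; exact_mod_cast this
  -- eventual positivity of L
  have hLpos : ∀ᶠ x : ℝ in atTop, 0 < L x := by
    have h1 := hLsv 1 one_pos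
    have h2 : ∀ᶠ x : ℝ in atTop, (1:ℝ)/2 < L (1*x) / L x :=
      h1.eventually (eventually_gt_nhds (by norm_num))
    filter_upwards [h2, eventually_gt_atTop (0:ℝ)] with x hx hx0
    have hne : L x ≠ 0 := by intro h; rw [one_mul, h] at hx; norm_num at hx
    have hnn : 0 ≤ L x := (hLdef x hx0) ▸ variance_nonneg _ _
    exact lt_of_le_of_ne hnn (Ne.symm hne)
  have hL1nn : ∀ x : ℝ, 0 < x → 0 ≤ L1 x := fun x hx => by
    rw [hL1def x hx]; positivity
  have hL1pos : ∀ᶠ x : ℝ in atTop, 0 < L1 x := by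
    have h1 := hL1sv 1 one_pos
    have h2 : ∀ᶠ x : ℝ in atTop, (1:ℝ)/2 < L1 (1*x) / L1 x :=
      h1.eventually (eventually_gt_nhds (by norm_num))
    filter_upwards [h2, eventually_gt_atTop (0:ℝ)] with x hx hx0
    have hne : L1 x ≠ 0 := by intro h; rw [one_mul, h] at hx; norm_num at hx
    exact lt_of_le_of_ne (hL1nn x hx0) (Ne.symm hne)
  have hdbl : ∀ᶠ x : ℝ in atTop, L1 (2*x) ≤ 3/2 * L1 x := by
    have h2 : ∀ᶠ x : ℝ in atTop, L1 (2*x) / L1 x < 3/2 :=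
      (hL1sv 2 two_pos).eventually (eventually_lt_nhds (by norm_num))
    filter_upwards [h2, hL1pos] with x hx hpos
    have := (div_lt_iff₀ hpos).mp hx
    linarith
  -- choose x₀
  obtain ⟨x₀', hx₀'⟩ := eventually_atTop.mp hdbl
  set x₀ : ℝ := max x₀' 1 with hx₀def
  have hx₀1 : (1:ℝ) ≤ x₀ := le_max_right _ _
  have hx₀pos : (0:ℝ) < x₀ := lt_of_lt_of_le one_pos hx₀1
  -- the m bound via dyadic lemma
  have hmbound : ∀ x, x₀ ≤ x →
      |∫ ω, (if |(X 0 ω : ℝ)| ≤ x then (X 0 ω : ℝ) else 0) ∂μ| ≤ 8 * L1 x / x := by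
    have hgb := aux_dyadic (fun x => ∫ ω, (if x < (X 0 ω : ℝ) then (X 0 ω : ℝ) else 0) ∂μ)
      L1 x₀ hx₀1
      (fun x hx => hL1nn x (lt_of_lt_of_le hx₀pos hx))
      (fun x hx => hx₀' x (le_trans (le_max_left _ _) hx))
      (fun x hx => ?_) (fun x hx => g_lim hZmeas hint x (lt_of_lt_of_le hx₀pos hx))
    · intro x hx
      have hx1 : (1:ℝ) ≤ x := le_trans hx₀1 hx
      have hxpos : (0:ℝ) < x := lt_of_lt_of_le one_pos hx1
      rw [m_eq_neg_g hZmeas hint hZval hmean x hx1, abs_neg,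
        abs_of_nonneg (g_nonneg x hxpos.le)]
      exact hgb x hx
    · -- step inequality
      have hxpos : (0:ℝ) < x := lt_of_lt_of_le hx₀pos hx
      have hstep := g_step hZmeas hint x hxpos
      have : 2 * x * (μ {ω | x ≤ (X 0 ω : ℝ)}).toReal = 2 * L1 x / x := by
        rw [hL1def x hxpos]; field_simp
      linarith [hstep, this ▸ hstep]
  rw [ENNReal.tendsto_atTop_zero]
  intro η hη
  set η' : ℝ := (min η 1).toReal with hη'def
  have hminTop : min η 1 ≠ ⊤ := ne_top_of_le_ne_top ENNReal.one_ne_top (min_le_right _ _)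
  have hη'pos : 0 < η' := ENNReal.toReal_pos (lt_min hη zero_lt_one).ne' hminTop
  have hofreal : ENNReal.ofReal η' ≤ η := by
    rw [hη'def, ENNReal.ofReal_toReal hminTop]; exact min_le_left _ _
  set δ : ℝ := min 1 (ε * Real.sqrt (η'/24)) with hδdef
  have hδpos : 0 < δ := lt_min one_pos (by positivity)
  have hδsq : 12 * δ^2 / ε^2 ≤ η'/2 := by
    have h1 : δ ≤ ε * Real.sqrt (η'/24) := min_le_right _ _
    have hs := Real.sq_sqrt (le_of_lt (by positivity : (0:ℝ) < η'/24))
    have h2 : δ^2 ≤ ε^2 * (η'/24) := by nlinarith [hδpos, Real.sqrt_nonneg (η'/24)]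
    rw [div_le_iff₀ (by positivity)]
    nlinarith
  -- limit machinery
  have hδa : Tendsto (fun n => δ * a n) atTop atTop := ha.const_mul_atTop hδpos
  have hδx : Tendsto (fun x : ℝ => δ * x) atTop atTop :=
    tendsto_id.const_mul_atTop hδpos
  have F2 : Tendsto (fun x => L1 (δ*x) / L x) atTop (𝓝 0) := by
    have t1 : Tendsto (fun x => L1 (δ*x)/L (δ*x) * (L (δ*x) / L x)) atTop (𝓝 0) := by
      have := (hratio.comp hδx).mul (hLsv δ hδpos)
      simpa using this
    refine Tendsto.congr' ?_ t1
    filter_upwards [hδx.eventually hLpos] with x hx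
    rw [div_mul_div_comm, mul_comm (L1 (δ*x)) (L (δ*x)), mul_div_mul_left _ _ hx.ne']
  have F3 : Tendsto (fun n : ℕ => (n:ℝ) * L (δ * a n) / a n^2) atTop (𝓝 2) := by
    have t := hnorm.mul ((hLsv δ hδpos).comp ha)
    refine Tendsto.congr' ?_ (by simpa using t)
    filter_upwards [ha.eventually hLpos] with n hn
    have han := (hapos n).ne'
    field_simp
    try ring
  have F4 : Tendsto (fun n : ℕ => L (a n) / a n^2) atTop (𝓝 0) := by
    have t := hnorm.mul tendsto_one_div_atTop_nhds_zero_nat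
    refine Tendsto.congr' ?_ (by simpa using t)
    filter_upwards [eventually_ge_atTop 1] with n hn
    have hn0 : (n:ℝ) ≠ 0 := Nat.cast_ne_zero.mpr (by omega)
    have han := (hapos n).ne'
    field_simp
    try ring
  have F45 : Tendsto (fun n : ℕ => L1 (δ * a n) / a n^2) atTop (𝓝 0) := by
    have t := (F2.comp ha).mul F4
    refine Tendsto.congr' ?_ (by simpa using t)
    filter_upwards [ha.eventually hLpos] with n hn
    have han := (hapos n).ne'
    field_simp
    try ring
  have F5 : Tendsto (fun n : ℕ => (n:ℝ) * L1 (δ * a n) / a n^2) atTop (𝓝 0) := by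
    have t := hnorm.mul (F2.comp ha)
    refine Tendsto.congr' ?_ (by simpa using t)
    filter_upwards [ha.eventually hLpos] with n hn
    have han := (hapos n).ne'
    field_simp
    try ring
  have F6 : Tendsto (fun n : ℕ => (n:ℝ) * L1 (δ * a n)^2 / a n^4) atTop (𝓝 0) := by
    have t := F5.mul F45
    refine Tendsto.congr' ?_ (by simpa using t)
    filter_upwards [] with n
    have han := (hapos n).ne'
    field_simp
    try ring
  have hQ : Tendsto (fun n : ℕ => (n:ℝ) *
      (∫ ω, (if |(X 0 ω : ℝ)| ≤ δ * a n then (X 0 ω : ℝ)^2 else 0) ∂μ) / a n^2)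
      atTop (𝓝 2) := by
    have hqeq : ∀ n : ℕ, (∫ ω, (if |(X 0 ω : ℝ)| ≤ δ * a n then (X 0 ω : ℝ)^2 else 0) ∂μ)
        = L (δ * a n) + (∫ ω, (if |(X 0 ω : ℝ)| ≤ δ * a n then (X 0 ω : ℝ) else 0) ∂μ)^2 := by
      intro n
      have hpos : (0:ℝ) < δ * a n := by have := hapos n; positivity
      rw [q_eq_L_add_m hZmeas (δ * a n), ← hLdef _ hpos]
    have hm2 : Tendsto (fun n : ℕ => (n:ℝ) *
        (∫ ω, (if |(X 0 ω : ℝ)| ≤ δ * a n then (X 0 ω : ℝ) else 0) ∂μ)^2 / a n^2)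
        atTop (𝓝 0) := by
      have hub : ∀ᶠ n : ℕ in atTop, (n:ℝ) *
          (∫ ω, (if |(X 0 ω : ℝ)| ≤ δ * a n then (X 0 ω : ℝ) else 0) ∂μ)^2 / a n^2
          ≤ 64/δ^2 * ((n:ℝ) * L1 (δ * a n)^2 / a n^4) := by
        filter_upwards [hδa.eventually_ge_atTop x₀] with n hn
        have hb := hmbound (δ * a n) hn
        have hpos : (0:ℝ) < δ * a n := lt_of_lt_of_le hx₀pos hn
        have hL1n : 0 ≤ L1 (δ * a n) := hL1nn _ hpos
        set mv := ∫ ω, (if |(X 0 ω : ℝ)| ≤ δ * a n then (X 0 ω : ℝ) else 0) ∂μ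
        have hsq : mv^2 ≤ (8 * L1 (δ * a n) / (δ * a n))^2 := by
          rw [← sq_abs mv]
          have hbn : (0:ℝ) ≤ 8 * L1 (δ * a n) / (δ * a n) := by positivity
          nlinarith [abs_nonneg mv]
        have key : (n:ℝ) * (8 * L1 (δ * a n) / (δ * a n))^2 / a n^2
            = 64/δ^2 * ((n:ℝ) * L1 (δ * a n)^2 / a n^4) := by
          have han := (hapos n).ne'
          field_simp
          try ring
        rw [← key]
        gcongr
      have hlb : ∀ᶠ n : ℕ in atTop, (0:ℝ) ≤ (n:ℝ) *
          (∫ ω, (if |(X 0 ω : ℝ)| ≤ δ * a n then (X 0 ω : ℝ) else 0) ∂μ)^2 / a n^2 := by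
        filter_upwards [] with n
        positivity
      have hub0 : Tendsto (fun n : ℕ => 64/δ^2 * ((n:ℝ) * L1 (δ * a n)^2 / a n^4))
          atTop (𝓝 0) := by
        simpa using F6.const_mul (64/δ^2)
      exact squeeze_zero' hlb hub hub0
    have h2 := F3.add hm2
    rw [show (2:ℝ) + 0 = 2 by norm_num] at h2
    refine Tendsto.congr' ?_ h2
    filter_upwards [] with n
    rw [hqeq n]
    ring
  have hR : Tendsto (fun n : ℕ => (n:ℝ) *
      (μ {ω | δ * a n < |(X 0 ω : ℝ)|}).toReal) atTop (𝓝 0) := by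
    have hub : ∀ᶠ n : ℕ in atTop, (n:ℝ) * (μ {ω | δ * a n < |(X 0 ω : ℝ)|}).toReal
        ≤ 1/δ^2 * ((n:ℝ) * L1 (δ * a n) / a n^2) := by
      filter_upwards [hδa.eventually_ge_atTop 1] with n hn
      have hpos : (0:ℝ) < δ * a n := lt_of_lt_of_le one_pos hn
      have hsub : {ω | δ * a n < |(X 0 ω : ℝ)|} ⊆ {ω | δ * a n ≤ (X 0 ω : ℝ)} := by
        intro ω hω
        simp only [Set.mem_setOf_eq] at hω ⊢
        rcases abs_cases ((X 0 ω : ℝ)) with ⟨he, _⟩ | ⟨he, _⟩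
        · linarith
        · have := hZval ω; linarith
      have hmono : (μ {ω | δ * a n < |(X 0 ω : ℝ)|}).toReal
          ≤ (μ {ω | δ * a n ≤ (X 0 ω : ℝ)}).toReal :=
        ENNReal.toReal_mono (measure_ne_top _ _) (measure_mono hsub)
      have heq : (μ {ω | δ * a n ≤ (X 0 ω : ℝ)}).toReal = L1 (δ * a n) / (δ * a n)^2 := by
        rw [hL1def _ hpos]
        field_simp
        rw [mul_div_cancel_left₀ _ (hapos n).ne']
      have key : (n:ℝ) * (L1 (δ * a n) / (δ * a n)^2)
          = 1/δ^2 * ((n:ℝ) * L1 (δ * a n) / a n^2) := by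
        rw [mul_pow]
        have han := (hapos n).ne'
        have hδn := hδpos.ne'
        field_simp
        try ring
      calc (n:ℝ) * (μ {ω | δ * a n < |(X 0 ω : ℝ)|}).toReal
          ≤ (n:ℝ) * (μ {ω | δ * a n ≤ (X 0 ω : ℝ)}).toReal := by gcongr
        _ = (n:ℝ) * (L1 (δ * a n) / (δ * a n)^2) := by rw [heq]
        _ = 1/δ^2 * ((n:ℝ) * L1 (δ * a n) / a n^2) := key
    have hlb : ∀ᶠ n : ℕ in atTop, (0:ℝ) ≤ (n:ℝ) *
        (μ {ω | δ * a n < |(X 0 ω : ℝ)|}).toReal := by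
      filter_upwards [] with n
      positivity
    have hub0 : Tendsto (fun n : ℕ => 1/δ^2 * ((n:ℝ) * L1 (δ * a n) / a n^2))
        atTop (𝓝 0) := by
      have hub0 := F5.const_mul (1/δ^2)
      rw [mul_zero] at hub0
      exact hub0
    exact squeeze_zero' hlb hub hub0
  have hQ3 : ∀ᶠ n : ℕ in atTop, (n:ℝ) *
      (∫ ω, (if |(X 0 ω : ℝ)| ≤ δ * a n then (X 0 ω : ℝ)^2 else 0) ∂μ) / a n^2 ≤ 3 :=
    hQ.eventually (eventually_le_nhds (by norm_num))
  have hQε : ∀ᶠ n : ℕ in atTop, |(n:ℝ) *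
      (∫ ω, (if |(X 0 ω : ℝ)| ≤ δ * a n then (X 0 ω : ℝ)^2 else 0) ∂μ) / a n^2 - 2| ≤ ε/2 := by
    have h0 := hQ.sub (tendsto_const_nhds (x := (2:ℝ)))
    rw [sub_self] at h0
    have h1 := h0.abs
    rw [abs_zero] at h1
    exact h1.eventually (eventually_le_nhds (by positivity))
  have hR2 : ∀ᶠ n : ℕ in atTop,
      (n:ℝ) * (μ {ω | δ * a n < |(X 0 ω : ℝ)|}).toReal ≤ η'/2 :=
    hR.eventually (eventually_le_nhds (by positivity))
  have h1a : ∀ᶠ n : ℕ in atTop, 1 ≤ δ * a n := hδa.eventually_ge_atTop 1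
  rw [← eventually_atTop]
  filter_upwards [hQ3, hQε, hR2, h1a] with n hQ3n hQεn hR2n h1an
  -- now n is fixed
  have hcpos : (0:ℝ) < δ * a n := lt_of_lt_of_le one_pos h1an
  set c : ℝ := δ * a n with hcdef
  set f : ℤ → ℝ := fun z => if |(z:ℝ)| ≤ c then (z:ℝ)^2 else 0 with hfdef
  have hfC : ∀ z : ℤ, ‖f z‖ ≤ c^2 := by
    intro z
    by_cases h : |(z:ℝ)| ≤ c
    · simp only [hfdef, h, if_true, Real.norm_eq_abs]
      rw [abs_of_nonneg (sq_nonneg _)]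
      nlinarith [abs_nonneg (z:ℝ), sq_abs (z:ℝ)]
    · simp only [hfdef, h, if_false, norm_zero]
      positivity
  have hYmem : ∀ i : ℕ, MemLp (fun ω => f (X i ω)) 2 μ := fun i =>
    MemLp.of_bound ((meas_int_cast f).comp (hmeas i)).aestronglyMeasurable _
      (ae_of_all _ fun ω => hfC (X i ω))
  set T : Ω → ℝ := ∑ i ∈ Finset.range n, (fun ω => f (X i ω)) with hTdef
  have hTmem : MemLp T 2 μ := memLp_finset_sum' _ (fun i _ => hYmem i)
  set q : ℝ := ∫ ω, (if |(X 0 ω : ℝ)| ≤ c then (X 0 ω : ℝ)^2 else 0) ∂μ with hqdef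
  have hq0 : (0:ℝ) ≤ q := by
    rw [hqdef]
    refine integral_nonneg fun ω => ?_
    by_cases h : |(X 0 ω : ℝ)| ≤ c <;> simp [h, sq_nonneg]
  have hfX0 : ∀ ω, f (X 0 ω) = (if |(X 0 ω : ℝ)| ≤ c then (X 0 ω : ℝ)^2 else 0) := fun ω => rfl
  have hET : μ[T] = (n:ℝ) * q := by
    have h1 : μ[T] = ∫ ω, (∑ i ∈ Finset.range n, f (X i ω)) ∂μ :=
      integral_congr_ae (ae_of_all _ fun ω => by rw [hTdef]; exact Finset.sum_apply ω _ _)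
    rw [h1, integral_finset_sum _ (fun i _ => ((hYmem i).integrable one_le_two))]
    have h2 : ∀ i ∈ Finset.range n, (∫ ω, f (X i ω) ∂μ) = q := by
      intro i _
      rw [ident_integral hmeas hident i f, hqdef]
    rw [Finset.sum_congr rfl h2, Finset.sum_const, Finset.card_range, nsmul_eq_mul]
  have hvarT : variance T μ ≤ (n:ℝ) * (c^2 * q) := by
    rw [hTdef, var_sum_le hmeas hindep hident n f (c^2) hfC]
    have h1 : variance (fun ω => f (X 0 ω)) μ ≤ μ[(fun ω => f (X 0 ω))^2] :=
      variance_le_expectation_sq ((meas_int_cast f).comp (hmeas 0)).aestronglyMeasurable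
    have h2 : μ[(fun ω => f (X 0 ω))^2] ≤ c^2 * q := by
      have hfun : ((fun ω => f (X 0 ω))^2) = (fun ω => (f (X 0 ω))^2) := rfl
      rw [hfun]
      have hintsq : Integrable (fun ω => (f (X 0 ω))^2) μ := (hYmem 0).integrable_sq
      have hpt : ∀ ω, (f (X 0 ω))^2
          ≤ c^2 * (if |(X 0 ω : ℝ)| ≤ c then (X 0 ω : ℝ)^2 else 0) := by
        intro ω
        simp only [hfdef]
        by_cases h : |(X 0 ω : ℝ)| ≤ c
        · simp only [h, if_true]
          have h2 := abs_nonneg ((X 0 ω : ℝ))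
          have h3 : (X 0 ω : ℝ)^2 ≤ c^2 := by
            nlinarith [sq_abs ((X 0 ω : ℝ))]
          nlinarith [sq_nonneg ((X 0 ω : ℝ))]
        · simp [h]
      calc ∫ ω, (f (X 0 ω))^2 ∂μ
          ≤ ∫ ω, c^2 * (if |(X 0 ω : ℝ)| ≤ c then (X 0 ω : ℝ)^2 else 0) ∂μ :=
            integral_mono hintsq ((int_trsq hZmeas c).const_mul _) hpt
        _ = c^2 * q := by rw [integral_const_mul, hqdef]
    have hn0 : (0:ℝ) ≤ (n:ℝ) := Nat.cast_nonneg n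
    exact mul_le_mul_of_nonneg_left (le_trans h1 h2) hn0
  have cheb := meas_ge_le_variance_div_sq (μ := μ) hTmem
    (c := ε/2 * a n^2) (by have := hapos n; positivity)
  have hchebR : ENNReal.ofReal (variance T μ / (ε/2 * a n^2)^2) ≤ ENNReal.ofReal (η'/2) := by
    apply ENNReal.ofReal_le_ofReal
    have hdpos : (0:ℝ) < (ε/2 * a n^2)^2 := by have := hapos n; positivity
    have hvq : variance T μ / (ε/2 * a n^2)^2 ≤ ((n:ℝ) * (c^2*q)) / (ε/2 * a n^2)^2 := by
      gcongr
    have heq2 : ((n:ℝ) * (c^2*q)) / (ε/2 * a n^2)^2 = (4*δ^2/ε^2) * ((n:ℝ)*q/a n^2) := by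
      rw [hcdef]
      have han := (hapos n).ne'
      have hεn := hε.ne'
      field_simp
      try ring
    have h3 : (4*δ^2/ε^2) * ((n:ℝ)*q/a n^2) ≤ (4*δ^2/ε^2) * 3 := by
      have hcoef : (0:ℝ) ≤ 4*δ^2/ε^2 := by positivity
      exact mul_le_mul_of_nonneg_left hQ3n hcoef
    have h4 : (4*δ^2/ε^2) * 3 = 12*δ^2/ε^2 := by ring
    calc variance T μ / (ε/2 * a n^2)^2 ≤ ((n:ℝ) * (c^2*q)) / (ε/2 * a n^2)^2 := hvq
      _ = (4*δ^2/ε^2) * ((n:ℝ)*q/a n^2) := heq2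
      _ ≤ (4*δ^2/ε^2) * 3 := h3
      _ = 12*δ^2/ε^2 := h4
      _ ≤ η'/2 := hδsq
  set W : Set Ω := ⋃ i ∈ Finset.range n, {ω | c < |(X i ω : ℝ)|} with hWdef
  set C : Set Ω := {ω | ε/2 * a n^2 ≤ |T ω - μ[T]|} with hCdef
  have hmuC : μ C ≤ ENNReal.ofReal (η'/2) := le_trans cheb hchebR
  have hmuW : μ W ≤ ENNReal.ofReal (η'/2) := by
    have hWb : μ W ≤ ∑ i ∈ Finset.range n, μ {ω | c < |(X i ω : ℝ)|} :=
      measure_biUnion_finset_le _ _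
    have hid : ∀ i ∈ Finset.range n,
        μ {ω | c < |(X i ω : ℝ)|} = μ {ω | c < |(X 0 ω : ℝ)|} := fun i _ =>
      ident_measure hmeas hident i {z : ℤ | c < |(z:ℝ)|}
    have hsum : ∑ i ∈ Finset.range n, μ {ω | c < |(X i ω : ℝ)|}
        = (n : ℝ≥0∞) * μ {ω | c < |(X 0 ω : ℝ)|} := by
      rw [Finset.sum_congr rfl hid, Finset.sum_const, Finset.card_range, nsmul_eq_mul]
    have hconv : (n : ℝ≥0∞) * μ {ω | c < |(X 0 ω : ℝ)|}
        = ENNReal.ofReal ((n:ℝ) * (μ {ω | c < |(X 0 ω : ℝ)|}).toReal) := by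
      rw [ENNReal.ofReal_mul (Nat.cast_nonneg n), ENNReal.ofReal_natCast,
        ENNReal.ofReal_toReal (measure_ne_top _ _)]
    calc μ W ≤ ∑ i ∈ Finset.range n, μ {ω | c < |(X i ω : ℝ)|} := hWb
      _ = (n : ℝ≥0∞) * μ {ω | c < |(X 0 ω : ℝ)|} := hsum
      _ = ENNReal.ofReal ((n:ℝ) * (μ {ω | c < |(X 0 ω : ℝ)|}).toReal) := hconv
      _ ≤ ENNReal.ofReal (η'/2) := ENNReal.ofReal_le_ofReal hR2n
  have hincl : {ω | ε < |((a n)^2)⁻¹ * (∑ i ∈ Finset.range n, (X i ω : ℝ)^2) - 2|}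
      ⊆ W ∪ C := by
    intro ω hω
    by_cases hWmem : ω ∈ W
    · exact Or.inl hWmem
    · right
      have hsmall : ∀ i ∈ Finset.range n, |(X i ω : ℝ)| ≤ c := by
        intro i hi
        by_contra hcon
        push_neg at hcon
        exact hWmem (Set.mem_biUnion hi hcon)
      have hTS : T ω = ∑ i ∈ Finset.range n, (X i ω : ℝ)^2 := by
        rw [hTdef]
        rw [Finset.sum_apply]
        refine Finset.sum_congr rfl fun i hi => ?_
        simp only [hfdef, hsmall i hi, if_true]
      simp only [Set.mem_setOf_eq] at hω
      rw [← hTS] at hω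
      have hEq : |((a n)^2)⁻¹ * μ[T] - 2| ≤ ε/2 := by
        rw [hET]
        have heq3 : ((a n)^2)⁻¹ * ((n:ℝ) * q) = (n:ℝ) * q / a n^2 := by
          rw [inv_mul_eq_div]
          try ring
        rw [heq3]
        exact hQεn
      have htri : ε/2 < |((a n)^2)⁻¹ * T ω - ((a n)^2)⁻¹ * μ[T]| := by
        have habs := abs_sub_abs_le_abs_sub (((a n)^2)⁻¹ * T ω - 2) (((a n)^2)⁻¹ * μ[T] - 2)
        have h5 : (((a n)^2)⁻¹ * T ω - 2) - (((a n)^2)⁻¹ * μ[T] - 2)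
            = ((a n)^2)⁻¹ * T ω - ((a n)^2)⁻¹ * μ[T] := by ring
        rw [h5] at habs
        calc ε/2 = ε - ε/2 := by ring
          _ < |((a n)^2)⁻¹ * T ω - 2| - |((a n)^2)⁻¹ * μ[T] - 2| := by
              have := hEq
              linarith [hω]
          _ ≤ |((a n)^2)⁻¹ * T ω - ((a n)^2)⁻¹ * μ[T]| := habs
      have hfinal : ε/2 * a n^2 ≤ |T ω - μ[T]| := by
        have hainv : ((a n)^2)⁻¹ * T ω - ((a n)^2)⁻¹ * μ[T] = ((a n)^2)⁻¹ * (T ω - μ[T]) := by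
          ring
        rw [hainv, abs_mul, abs_of_nonneg (by positivity : (0:ℝ) ≤ ((a n)^2)⁻¹)] at htri
        have ha2 : (0:ℝ) < (a n)^2 := by have := hapos n; positivity
        have hstep := mul_le_mul_of_nonneg_right htri.le ha2.le
        have hcancel : ((a n)^2)⁻¹ * |T ω - μ[T]| * a n^2 = |T ω - μ[T]| := by
          field_simp
          rw [mul_div_cancel_left₀ _ (hapos n).ne']
        rw [hcancel] at hstep
        exact hstep
      exact hfinal
  calc μ {ω | ε < |((a n)^2)⁻¹ * (∑ i ∈ Finset.range n, (X i ω : ℝ)^2) - 2|}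
      ≤ μ (W ∪ C) := measure_mono hincl
    _ ≤ μ W + μ C := measure_union_le _ _
    _ ≤ ENNReal.ofReal (η'/2) + ENNReal.ofReal (η'/2) :=
        add_le_add hmuW hmuC
    _ = ENNReal.ofReal η' := by
        rw [← ENNReal.ofReal_add (by positivity) (by positivity)]
        norm_num
    _ ≤ η := hofreal
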